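/- Let β₁, β₂ ∈ ℝ and c > 0. Set d = −β₁β₂ − c, B₊ = β₂(β₁ + √2) + c, B₋ = β₂(β₁ − √2) + c, and define G : ℝ → ℂ by G(u) = d·u² + β₂·u·√(2u² + 1) + i·(β₁·u − √(2u² + 1)). Assume B₊ ≠ 0 and B₋ ≠ 0. Then G never vanishes on ℝ, and with 𝒮(u) = G(u)/conj(G(u)) one has lim_{T→∞} ∫_{−T}^{T} 𝒮'(u)/𝒮(u) du = 2πi·w, where: w = sign(B₊) if B₊·B₋ < 0; w = 0 if B₊ > 0 and B₋ > 0; and w = 2·sign(√2 − β₁) if B₊ < 0 and B₋ < 0 (in which case β₁² > 2, so the sign is well defined). In particular, a ghost charge w_∞ = ±2 occurs precisely when B₊ < 0 and B₋ < 0. -/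

import Mathlib

open Filter Real

noncomputable def sf (u : ℝ) : ℝ := Real.sqrt (2 * u ^ 2 + 1)
lemma sf_pos (u : ℝ) : 0 < sf u := Real.sqrt_pos.2 (by positivity)
lemma sf_ne (u : ℝ) : sf u ≠ 0 := (sf_pos u).ne'
lemma sf_sq (u : ℝ) : sf u ^ 2 = 2 * u ^ 2 + 1 := Real.sq_sqrt (by positivity)
lemma sf_cont : Continuous sf := Real.continuous_sqrt.comp (by continuity)

noncomputable def sf' (u : ℝ) : ℝ := 2 * u / sf u
lemma sf'_cont : Continuous sf' :=
  ((continuous_const.mul continuous_id).div sf_cont fun u => sf_ne u)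

lemma hasDerivAt_sf (u : ℝ) : HasDerivAt sf (sf' u) u := by
  have h : HasDerivAt (fun u : ℝ => 2 * u ^ 2 + 1) (2 * (2 * u ^ 1)) u :=
    ((hasDerivAt_pow 2 u).const_mul 2).add_const 1
  have h2 := (Real.hasDerivAt_sqrt (x := 2 * u ^ 2 + 1) (by positivity)).comp u h
  refine h2.congr_deriv ?_
  have := sf_ne u
  rw [sf', show Real.sqrt (2*u^2+1) = sf u from rfl]
  field_simp

noncomputable def Pf (β₂ : ℝ) (u : ℝ) : ℂ := 1 + (β₂ * u : ℝ) * Complex.I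
noncomputable def Gf (β₁ β₂ d : ℝ) (u : ℝ) : ℂ :=
  ((d * u ^ 2 + β₂ * u * sf u : ℝ) : ℂ) + Complex.I * ((β₁ * u - sf u : ℝ) : ℂ)
noncomputable def Gf' (β₁ β₂ d : ℝ) (u : ℝ) : ℂ :=
  ((2 * d * u + β₂ * sf u + β₂ * u * sf' u : ℝ) : ℂ) + Complex.I * ((β₁ - sf' u : ℝ) : ℂ)
noncomputable def Qf (β₁ β₂ d : ℝ) (u : ℝ) : ℂ := -Gf β₁ β₂ d u / Pf β₂ u
noncomputable def Qf' (β₁ β₂ d : ℝ) (u : ℝ) : ℂ :=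
  (-Gf' β₁ β₂ d u * Pf β₂ u - -Gf β₁ β₂ d u * ((β₂ : ℂ) * Complex.I)) / Pf β₂ u ^ 2

lemma Pf_re (β₂ u : ℝ) : (Pf β₂ u).re = 1 := by simp [Pf]
lemma Pf_im (β₂ u : ℝ) : (Pf β₂ u).im = β₂ * u := by simp [Pf]
lemma Pf_ne (β₂ u : ℝ) : Pf β₂ u ≠ 0 := by
  intro h
  have := congrArg Complex.re h
  simp [Pf] at this
lemma Pf_slit (β₂ u : ℝ) : Pf β₂ u ∈ Complex.slitPlane := by
  rw [Complex.mem_slitPlane_iff]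
  left; simp [Pf]

lemma Gf_re (β₁ β₂ d u : ℝ) : (Gf β₁ β₂ d u).re = d * u ^ 2 + β₂ * u * sf u := by
  simp [Gf, ← Complex.ofReal_pow]
lemma Gf_im (β₁ β₂ d u : ℝ) : (Gf β₁ β₂ d u).im = β₁ * u - sf u := by
  simp [Gf, ← Complex.ofReal_pow]

lemma Pf_cont (β₂ : ℝ) : Continuous (Pf β₂) := by
  unfold Pf; continuity
lemma Gf_cont (β₁ β₂ d : ℝ) : Continuous (Gf β₁ β₂ d) := by
  have h1 : Continuous fun u : ℝ => d * u ^ 2 + β₂ * u * sf u :=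
    ((continuous_const.mul (continuous_pow 2)).add
      ((continuous_const.mul continuous_id).mul sf_cont))
  have h2 : Continuous fun u : ℝ => β₁ * u - sf u :=
    (continuous_const.mul continuous_id).sub sf_cont
  exact (Complex.continuous_ofReal.comp h1).add
    (continuous_const.mul (Complex.continuous_ofReal.comp h2))

lemma hasDerivAt_Pf (β₂ : ℝ) (u : ℝ) : HasDerivAt (Pf β₂) ((β₂ : ℂ) * Complex.I) u := by
  have h : HasDerivAt (fun u : ℝ => ((β₂ * u : ℝ) : ℂ)) (β₂ : ℂ) u := by
    simpa using ((hasDerivAt_id u).const_mul β₂).ofReal_comp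
  exact (h.mul_const Complex.I).const_add 1

lemma hasDerivAt_Gf (β₁ β₂ d : ℝ) (u : ℝ) : HasDerivAt (Gf β₁ β₂ d) (Gf' β₁ β₂ d u) u := by
  have h1 : HasDerivAt (fun u : ℝ => d * u ^ 2 + β₂ * u * sf u)
      (2 * d * u + β₂ * sf u + β₂ * u * sf' u) u := by
    have ha : HasDerivAt (fun u : ℝ => d * u ^ 2) (d * (2 * u ^ 1)) u :=
      (hasDerivAt_pow 2 u).const_mul d
    have hb : HasDerivAt (fun u : ℝ => β₂ * u * sf u)
        (β₂ * sf u + β₂ * u * sf' u) u := by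
      have := (((hasDerivAt_id u).const_mul β₂).mul (hasDerivAt_sf u))
      simp only [id_eq] at this
      exact this.congr_deriv (by ring)
    exact (ha.add hb).congr_deriv (by ring)
  have h2 : HasDerivAt (fun u : ℝ => β₁ * u - sf u) (β₁ - sf' u) u := by
    exact (((hasDerivAt_id u).const_mul β₁).sub (hasDerivAt_sf u)).congr_deriv (by simp)
  exact (h1.ofReal_comp).add ((h2.ofReal_comp).const_mul Complex.I)

lemma hasDerivAt_Qf (β₁ β₂ d : ℝ) (u : ℝ) :
    HasDerivAt (Qf β₁ β₂ d) (Qf' β₁ β₂ d u) u :=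
  ((hasDerivAt_Gf β₁ β₂ d u).neg.div (hasDerivAt_Pf β₂ u) (Pf_ne β₂ u))

lemma Gf_eq (β₁ β₂ d : ℝ) (u : ℝ) : Gf β₁ β₂ d u = -(Pf β₂ u * Qf β₁ β₂ d u) := by
  rw [Qf, mul_div_cancel₀ _ (Pf_ne β₂ u)]
  ring

lemma Qf_slit {β₁ β₂ c d : ℝ} (hc : 0 < c) (hd : d = -β₁ * β₂ - c) (u : ℝ) :
    Qf β₁ β₂ d u ∈ Complex.slitPlane := by
  have hN : 0 < Complex.normSq (Pf β₂ u) := Complex.normSq_pos.2 (Pf_ne β₂ u)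
  have hre : (Qf β₁ β₂ d u).re = c * u ^ 2 / Complex.normSq (Pf β₂ u) := by
    rw [Qf, Complex.div_re, Complex.neg_re, Complex.neg_im, Gf_re, Gf_im, Pf_re, Pf_im, hd]
    ring_nf
  have him : (Qf β₁ β₂ d u).im
      = (sf u - β₁ * u + (d * u ^ 2 + β₂ * u * sf u) * (β₂ * u)) / Complex.normSq (Pf β₂ u) := by
    rw [Qf, Complex.div_im, Complex.neg_re, Complex.neg_im, Gf_re, Gf_im, Pf_re, Pf_im]
    ring_nf
  rw [Complex.mem_slitPlane_iff]
  rcases eq_or_ne u 0 with hu | hu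
  · right
    rw [him, hu]
    have : sf 0 = 1 := by simp [sf]
    simp [this, Complex.normSq_apply, Pf_re, Pf_im, hu]
  · left
    rw [hre]
    have : 0 < c * u ^ 2 := by positivity
    positivity

lemma Qf_ne {β₁ β₂ c d : ℝ} (hc : 0 < c) (hd : d = -β₁ * β₂ - c) (u : ℝ) :
    Qf β₁ β₂ d u ≠ 0 :=
  Complex.slitPlane_ne_zero (Qf_slit hc hd u)

lemma Gf_ne {β₁ β₂ c d : ℝ} (hc : 0 < c) (hd : d = -β₁ * β₂ - c) (u : ℝ) :
    Gf β₁ β₂ d u ≠ 0 := by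
  rw [Gf_eq]
  exact neg_ne_zero.2 (mul_ne_zero (Pf_ne β₂ u) (Qf_ne hc hd u))

noncomputable def Lf (β₁ β₂ d : ℝ) (u : ℝ) : ℂ :=
  Complex.log (Pf β₂ u) + Complex.log (Qf β₁ β₂ d u)
noncomputable def Lf' (β₁ β₂ d : ℝ) (u : ℝ) : ℂ :=
  ((β₂ : ℝ) : ℂ) * Complex.I / Pf β₂ u + Qf' β₁ β₂ d u / Qf β₁ β₂ d u
noncomputable def Mf (β₁ β₂ d : ℝ) (u : ℝ) : ℂ :=
  Lf β₁ β₂ d u - (starRingEnd ℂ) (Lf β₁ β₂ d u)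
noncomputable def Mf' (β₁ β₂ d : ℝ) (u : ℝ) : ℂ :=
  Lf' β₁ β₂ d u - (starRingEnd ℂ) (Lf' β₁ β₂ d u)

lemma hasDerivAt_Lf {β₁ β₂ c d : ℝ} (hc : 0 < c) (hd : d = -β₁ * β₂ - c) (u : ℝ) :
    HasDerivAt (Lf β₁ β₂ d) (Lf' β₁ β₂ d u) u :=
  ((hasDerivAt_Pf β₂ u).clog_real (Pf_slit β₂ u)).add
    ((hasDerivAt_Qf β₁ β₂ d u).clog_real (Qf_slit hc hd u))

lemma hasDerivAt_Mf {β₁ β₂ c d : ℝ} (hc : 0 < c) (hd : d = -β₁ * β₂ - c) (u : ℝ) :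
    HasDerivAt (Mf β₁ β₂ d) (Mf' β₁ β₂ d u) u := by
  have h := hasDerivAt_Lf hc hd u
  exact h.sub h.star

lemma exp_Lf {β₁ β₂ c d : ℝ} (hc : 0 < c) (hd : d = -β₁ * β₂ - c) (u : ℝ) :
    Complex.exp (Lf β₁ β₂ d u) = Pf β₂ u * Qf β₁ β₂ d u := by
  rw [Lf, Complex.exp_add, Complex.exp_log (Pf_ne β₂ u), Complex.exp_log (Qf_ne hc hd u)]

lemma exp_Mf {β₁ β₂ c d : ℝ} (hc : 0 < c) (hd : d = -β₁ * β₂ - c) (u : ℝ) :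
    Complex.exp (Mf β₁ β₂ d u) = Gf β₁ β₂ d u / (starRingEnd ℂ) (Gf β₁ β₂ d u) := by
  rw [Mf, Complex.exp_sub, Complex.exp_conj, exp_Lf hc hd, Gf_eq, map_neg, neg_div_neg_eq]

lemma Qf_cont (β₁ β₂ d : ℝ) : Continuous (Qf β₁ β₂ d) :=
  ((Gf_cont β₁ β₂ d).neg.div (Pf_cont β₂) fun u => Pf_ne β₂ u)

lemma Gf'_cont (β₁ β₂ d : ℝ) : Continuous (Gf' β₁ β₂ d) := by
  have h1 : Continuous fun u : ℝ => 2 * d * u + β₂ * sf u + β₂ * u * sf' u := by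
    exact ((continuous_const.mul continuous_id).add (continuous_const.mul sf_cont)).add
      ((continuous_const.mul continuous_id).mul sf'_cont)
  have h2 : Continuous fun u : ℝ => β₁ - sf' u := continuous_const.sub sf'_cont
  exact (Complex.continuous_ofReal.comp h1).add
    (continuous_const.mul (Complex.continuous_ofReal.comp h2))

lemma Qf'_cont (β₁ β₂ d : ℝ) : Continuous (Qf' β₁ β₂ d) := by
  unfold Qf'
  exact (((Gf'_cont β₁ β₂ d).neg.mul (Pf_cont β₂)).sub
      ((Gf_cont β₁ β₂ d).neg.mul continuous_const)).div
    ((Pf_cont β₂).pow 2) fun u => pow_ne_zero 2 (Pf_ne β₂ u)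

lemma Mf'_cont {β₁ β₂ c d : ℝ} (hc : 0 < c) (hd : d = -β₁ * β₂ - c) :
    Continuous (Mf' β₁ β₂ d) := by
  have hL : Continuous (Lf' β₁ β₂ d) := by
    unfold Lf'
    exact (continuous_const.div (Pf_cont β₂) fun u => Pf_ne β₂ u).add
      ((Qf'_cont β₁ β₂ d).div (Qf_cont β₁ β₂ d) fun u => Qf_ne hc hd u)
  exact hL.sub (Complex.continuous_conj.comp hL)

noncomputable def Af (β₁ β₂ d : ℝ) (u : ℝ) : ℝ :=
  (Pf β₂ u).arg + (Qf β₁ β₂ d u).arg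

lemma Mf_eq_Af (β₁ β₂ d : ℝ) (u : ℝ) :
    Mf β₁ β₂ d u = ((2 * Af β₁ β₂ d u : ℝ) : ℂ) * Complex.I := by
  rw [Mf, Complex.sub_conj]
  congr 2
  rw [Af, Lf, Complex.add_im, Complex.log_im, Complex.log_im]

lemma integral_eq {β₁ β₂ c d : ℝ} (hc : 0 < c) (hd : d = -β₁ * β₂ - c)
    (S : ℝ → ℂ) (hS : S = fun u => Gf β₁ β₂ d u / (starRingEnd ℂ) (Gf β₁ β₂ d u)) (T : ℝ) :
    ∫ u in (-T)..T, deriv S u / S u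
      = ((2 * (Af β₁ β₂ d T - Af β₁ β₂ d (-T)) : ℝ) : ℂ) * Complex.I := by
  have hS' : S = fun u => Complex.exp (Mf β₁ β₂ d u) := by
    rw [hS]; funext u; rw [exp_Mf hc hd u]
  have hquot : ∀ u : ℝ, deriv S u / S u = Mf' β₁ β₂ d u := by
    intro u
    have hder : HasDerivAt S (Complex.exp (Mf β₁ β₂ d u) * Mf' β₁ β₂ d u) u := by
      rw [hS']
      exact (hasDerivAt_Mf hc hd u).cexp
    rw [hder.deriv, hS']
    field_simp [Complex.exp_ne_zero]
  have h1 : ∫ u in (-T)..T, deriv S u / S u = ∫ u in (-T)..T, Mf' β₁ β₂ d u := by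
    apply intervalIntegral.integral_congr
    intro u _
    exact hquot u
  rw [h1, intervalIntegral.integral_eq_sub_of_hasDerivAt
    (fun x _ => hasDerivAt_Mf hc hd x) ((Mf'_cont hc hd).intervalIntegrable _ _),
    Mf_eq_Af, Mf_eq_Af]
  push_cast
  ring

-- limit lemmas

lemma tendsto_arg_atTop (f : ℝ → ℂ) (g : ℝ → ℝ) (z : ℂ) (hz : z ∈ Complex.slitPlane)
    (hg : ∀ᶠ T in atTop, 0 < g T)
    (h : Tendsto (fun T => f T / ((g T : ℝ) : ℂ)) atTop (nhds z)) :
    Tendsto (fun T => (f T).arg) atTop (nhds z.arg) := by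
  have h1 : Tendsto (fun T => (f T / ((g T : ℝ) : ℂ)).arg) atTop (nhds z.arg) :=
    (Complex.continuousAt_arg hz).tendsto.comp h
  refine h1.congr' ?_
  filter_upwards [hg] with T hT
  have h0 : ((g T : ℝ) : ℂ) ≠ 0 := Complex.ofReal_ne_zero.2 hT.ne'
  calc (f T / ((g T : ℝ) : ℂ)).arg
      = (((g T : ℝ) : ℂ) * (f T / ((g T : ℝ) : ℂ))).arg := (Complex.arg_real_mul _ hT).symm
    _ = (f T).arg := by rw [mul_comm, div_mul_cancel₀ _ h0]

lemma arg_mul_I_pos {x : ℝ} (hx : 0 < x) : ((x : ℂ) * Complex.I).arg = π / 2 := by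
  rw [Complex.arg_real_mul _ hx, Complex.arg_I]

lemma arg_mul_I_neg {x : ℝ} (hx : x < 0) : ((x : ℂ) * Complex.I).arg = -(π / 2) := by
  rw [show (x : ℂ) * Complex.I = ((-x : ℝ) : ℂ) * (-Complex.I) by push_cast; ring,
    Complex.arg_real_mul _ (by linarith), Complex.arg_neg_I]

lemma arg_mul_neg_I_pos {x : ℝ} (hx : 0 < x) : ((x : ℂ) * -Complex.I).arg = -(π / 2) := by
  rw [show (x : ℂ) * -Complex.I = ((-x : ℝ) : ℂ) * Complex.I by push_cast; ring,
    arg_mul_I_neg (by linarith)]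

lemma arg_mul_neg_I_neg {x : ℝ} (hx : x < 0) : ((x : ℂ) * -Complex.I).arg = π / 2 := by
  rw [show (x : ℂ) * -Complex.I = ((-x : ℝ) : ℂ) * Complex.I by push_cast; ring,
    arg_mul_I_pos (by linarith)]

-- sqrt asymptotics
lemma sf_div_lim : Tendsto (fun T : ℝ => sf T / T) atTop (nhds (Real.sqrt 2)) := by
  have h1 : Tendsto (fun T : ℝ => 2 + 1 / T ^ 2) atTop (nhds 2) := by
    have hp : Tendsto (fun x : ℝ => x ^ 2) atTop atTop :=
      tendsto_pow_atTop (two_ne_zero)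
    have : Tendsto (fun T : ℝ => 1 / T ^ 2) atTop (nhds 0) := by
      simpa [one_div, Pi.inv_def] using hp.inv_tendsto_atTop
    simpa using tendsto_const_nhds.add this
  have h2 : Tendsto (fun T : ℝ => Real.sqrt (2 + 1 / T ^ 2)) atTop (nhds (Real.sqrt 2)) := by
    have := (Real.continuous_sqrt.tendsto 2).comp h1
    simpa [Function.comp_def] using this
  refine h2.congr' ?_
  filter_upwards [eventually_gt_atTop 0] with T hT
  rw [sf]
  rw [show 2 + 1 / T ^ 2 = (2 * T ^ 2 + 1) / T ^ 2 by field_simp]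
  rw [Real.sqrt_div (by positivity : (0:ℝ) ≤ 2 * T ^ 2 + 1), Real.sqrt_sq hT.le]

lemma sf_neg (T : ℝ) : sf (-T) = sf T := by simp [sf]

-- Pf/T limit
lemma Pf_div_lim (b : ℝ) : Tendsto (fun T : ℝ => Pf b T / (T : ℂ)) atTop
    (nhds ((b : ℂ) * Complex.I)) := by
  have h1 : Tendsto (fun T : ℝ => ((T : ℂ))⁻¹ + (b : ℂ) * Complex.I) atTop
      (nhds ((b : ℂ) * Complex.I)) := by
    have h0 : Tendsto (fun T : ℝ => ((T : ℂ))⁻¹) atTop (nhds 0) := by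
      have := (Complex.continuous_ofReal.tendsto 0).comp tendsto_inv_atTop_zero
      simpa [Function.comp_def, Complex.ofReal_inv] using this
    simpa using h0.add (tendsto_const_nhds (x := (b : ℂ) * Complex.I))
  refine h1.congr' ?_
  filter_upwards [eventually_gt_atTop 0] with T hT
  have hT0 : (T : ℂ) ≠ 0 := Complex.ofReal_ne_zero.2 hT.ne'
  rw [Pf]
  push_cast
  field_simp

lemma inv_lim : Tendsto (fun T : ℝ => 1 / T) atTop (nhds 0) := by
  simpa [one_div] using (tendsto_inv_atTop_zero : Tendsto (fun x : ℝ => x⁻¹) atTop (nhds 0))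

lemma Gf_div_lim_pos (β₁ β₂ d : ℝ) :
    Tendsto (fun T : ℝ => Gf β₁ β₂ d T / ((T : ℂ)) ^ 2) atTop
      (nhds ((d + β₂ * Real.sqrt 2 : ℝ) : ℂ)) := by
  have hr1 : Tendsto (fun T : ℝ => d + β₂ * (sf T / T)) atTop
      (nhds (d + β₂ * Real.sqrt 2)) :=
    tendsto_const_nhds.add (sf_div_lim.const_mul β₂)
  have hr2 : Tendsto (fun T : ℝ => (β₁ - sf T / T) * (1 / T)) atTop (nhds 0) := by
    have := ((tendsto_const_nhds (x := β₁)).sub sf_div_lim).mul inv_lim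
    simpa using this
  have hC : Tendsto (fun T : ℝ =>
      ((d + β₂ * (sf T / T) : ℝ) : ℂ) + (((β₁ - sf T / T) * (1 / T) : ℝ) : ℂ) * Complex.I)
      atTop (nhds (((d + β₂ * Real.sqrt 2 : ℝ) : ℂ) + ((0 : ℝ) : ℂ) * Complex.I)) :=
    ((Complex.continuous_ofReal.tendsto _).comp hr1).add
      (((Complex.continuous_ofReal.tendsto _).comp hr2).mul_const Complex.I)
  simp only [Complex.ofReal_zero, zero_mul, add_zero] at hC
  refine hC.congr' ?_
  filter_upwards [eventually_gt_atTop 0] with T hT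
  have hT0 : (T : ℂ) ≠ 0 := Complex.ofReal_ne_zero.2 hT.ne'
  rw [Gf, eq_div_iff (pow_ne_zero 2 hT0)]
  push_cast
  field_simp

lemma Gf_div_lim_neg (β₁ β₂ d : ℝ) :
    Tendsto (fun T : ℝ => Gf β₁ β₂ d (-T) / ((T : ℂ)) ^ 2) atTop
      (nhds ((d - β₂ * Real.sqrt 2 : ℝ) : ℂ)) := by
  have hr1 : Tendsto (fun T : ℝ => d - β₂ * (sf T / T)) atTop
      (nhds (d - β₂ * Real.sqrt 2)) :=
    tendsto_const_nhds.sub (sf_div_lim.const_mul β₂)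
  have hr2 : Tendsto (fun T : ℝ => (-β₁ - sf T / T) * (1 / T)) atTop (nhds 0) := by
    have := ((tendsto_const_nhds (x := -β₁)).sub sf_div_lim).mul inv_lim
    simpa using this
  have hC : Tendsto (fun T : ℝ =>
      ((d - β₂ * (sf T / T) : ℝ) : ℂ) + (((-β₁ - sf T / T) * (1 / T) : ℝ) : ℂ) * Complex.I)
      atTop (nhds (((d - β₂ * Real.sqrt 2 : ℝ) : ℂ) + ((0 : ℝ) : ℂ) * Complex.I)) :=
    ((Complex.continuous_ofReal.tendsto _).comp hr1).add
      (((Complex.continuous_ofReal.tendsto _).comp hr2).mul_const Complex.I)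
  simp only [Complex.ofReal_zero, zero_mul, add_zero] at hC
  refine hC.congr' ?_
  filter_upwards [eventually_gt_atTop 0] with T hT
  have hT0 : (T : ℂ) ≠ 0 := Complex.ofReal_ne_zero.2 hT.ne'
  rw [Gf, sf_neg, eq_div_iff (pow_ne_zero 2 hT0)]
  push_cast
  field_simp
  ring

lemma argP_lim (b : ℝ) (hb : b ≠ 0) :
    Tendsto (fun T : ℝ => (Pf b T).arg) atTop (nhds ((b : ℂ) * Complex.I).arg) := by
  refine tendsto_arg_atTop _ id _ ?_ (eventually_gt_atTop 0) ?_
  · rw [Complex.mem_slitPlane_iff]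
    right; simpa using hb
  · exact Pf_div_lim b

lemma argQ_gen (b m : ℝ) (F : ℝ → ℂ) (hb : b ≠ 0) (hm : m ≠ 0)
    (hF : Tendsto (fun T : ℝ => F T / ((T : ℂ)) ^ 2) atTop (nhds ((-m : ℝ) : ℂ))) :
    Tendsto (fun T : ℝ => (-F T / Pf b T).arg) atTop
      (nhds (((m / b : ℝ) : ℂ) * -Complex.I).arg) := by
  have hbC : (b : ℂ) * Complex.I ≠ 0 := by
    simp [Complex.ext_iff, hb]
  refine tendsto_arg_atTop _ id _ ?_ (eventually_gt_atTop 0) ?_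
  · rw [Complex.mem_slitPlane_iff]
    right
    simp [div_ne_zero hm hb]
  · have hq : Tendsto (fun T : ℝ => (-(F T / ((T : ℂ)) ^ 2)) / (Pf b T / (T : ℂ))) atTop
        (nhds ((-((-m : ℝ) : ℂ)) / ((b : ℂ) * Complex.I))) :=
      (hF.neg).div (Pf_div_lim b) hbC
    have hbR : (b : ℂ) ≠ 0 := Complex.ofReal_ne_zero.2 hb
    have hval : (-((-m : ℝ) : ℂ)) / ((b : ℂ) * Complex.I) = ((m / b : ℝ) : ℂ) * -Complex.I := by
      rw [div_eq_iff hbC]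
      push_cast
      field_simp
      linear_combination (m : ℂ) * Complex.I_sq
    rw [hval] at hq
    refine hq.congr' ?_
    filter_upwards [eventually_gt_atTop 0] with T hT
    have hT0 : (T : ℂ) ≠ 0 := Complex.ofReal_ne_zero.2 hT.ne'
    have hP := Pf_ne b T
    show -(F T / ((T : ℂ)) ^ 2) / (Pf b T / (T : ℂ)) = -F T / Pf b T / ((id T : ℝ) : ℂ)
    field_simp
    simp [hT0]

lemma Pf_neg (β₂ T : ℝ) : Pf β₂ (-T) = Pf (-β₂) T := by
  simp [Pf, mul_neg, neg_mul]

lemma hv_gen {β₁ β₂ c d Bp Bm : ℝ} (hc : 0 < c) (hd : d = -β₁ * β₂ - c)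
    (hBp : Bp = β₂ * (β₁ + Real.sqrt 2) + c) (hBm : Bm = β₂ * (β₁ - Real.sqrt 2) + c)
    (hβ₂ : β₂ ≠ 0) (hBp0 : Bp ≠ 0) (hBm0 : Bm ≠ 0) :
    Tendsto (fun T => Af β₁ β₂ d T - Af β₁ β₂ d (-T)) atTop
      (nhds ((((β₂ : ℂ) * Complex.I).arg + (((Bm / β₂ : ℝ) : ℂ) * -Complex.I).arg)
        - ((((-β₂ : ℝ) : ℂ) * Complex.I).arg + (((Bp / -β₂ : ℝ) : ℂ) * -Complex.I).arg))) := by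
  have h1 := argP_lim β₂ hβ₂
  have h3 := argP_lim (-β₂) (neg_ne_zero.2 hβ₂)
  have hFm : Tendsto (fun T : ℝ => Gf β₁ β₂ d T / ((T : ℂ)) ^ 2) atTop
      (nhds ((-Bm : ℝ) : ℂ)) := by
    have := Gf_div_lim_pos β₁ β₂ d
    rwa [show (d + β₂ * Real.sqrt 2 : ℝ) = -Bm from by rw [hBm, hd]; ring] at this
  have h2 := argQ_gen β₂ Bm (Gf β₁ β₂ d) hβ₂ hBm0 hFm
  have hFp : Tendsto (fun T : ℝ => Gf β₁ β₂ d (-T) / ((T : ℂ)) ^ 2) atTop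
      (nhds ((-Bp : ℝ) : ℂ)) := by
    have := Gf_div_lim_neg β₁ β₂ d
    rwa [show (d - β₂ * Real.sqrt 2 : ℝ) = -Bp from by rw [hBp, hd]; ring] at this
  have h4 := argQ_gen (-β₂) Bp (fun T => Gf β₁ β₂ d (-T)) (neg_ne_zero.2 hβ₂) hBp0 hFp
  have e3 : (fun T : ℝ => (Pf (-β₂) T).arg) = fun T => (Pf β₂ (-T)).arg := by
    funext T; rw [Pf_neg]
  have e2 : (fun T : ℝ => (-Gf β₁ β₂ d T / Pf β₂ T).arg) = fun T => (Qf β₁ β₂ d T).arg := rfl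
  have e4 : (fun T : ℝ => (-(fun T => Gf β₁ β₂ d (-T)) T / Pf (-β₂) T).arg)
      = fun T => (Qf β₁ β₂ d (-T)).arg := by
    funext T
    rw [Qf, Pf_neg]
  rw [e3] at h3
  rw [e2] at h2
  rw [e4] at h4
  have := (h1.add h2).sub (h3.add h4)
  simpa [Af] using this

lemma reduce_tendsto {β₁ β₂ c d : ℝ} (hc : 0 < c) (hd : d = -β₁ * β₂ - c)
    (S : ℝ → ℂ) (hS : S = fun u => Gf β₁ β₂ d u / (starRingEnd ℂ) (Gf β₁ β₂ d u))
    (v : ℝ) (W : ℂ) (hW : ((2 * v : ℝ) : ℂ) * Complex.I = W)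
    (hv : Tendsto (fun T => Af β₁ β₂ d T - Af β₁ β₂ d (-T)) atTop (nhds v)) :
    Tendsto (fun T : ℝ => ∫ u in (-T)..T, deriv S u / S u) atTop (nhds W) := by
  have heq : (fun T : ℝ => ∫ u in (-T)..T, deriv S u / S u)
      = fun T => ((2 * (Af β₁ β₂ d T - Af β₁ β₂ d (-T)) : ℝ) : ℂ) * Complex.I :=
    funext (integral_eq hc hd S hS)
  rw [heq, ← hW]
  have hcont : Continuous fun x : ℝ => ((2 * x : ℝ) : ℂ) * Complex.I := by
    exact (Complex.continuous_ofReal.comp (continuous_const.mul continuous_id)).mul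
      continuous_const
  have := (hcont.tendsto v).comp hv
  simpa [Function.comp_def] using this

lemma Pf_zero (T : ℝ) : Pf 0 T = 1 := by simp [Pf]

lemma argQ_zero_pos {β₁ c d : ℝ} (hc : 0 < c) (hd : d = -β₁ * 0 - c) :
    Tendsto (fun T : ℝ => (Qf β₁ 0 d T).arg) atTop (nhds 0) := by
  have hz : ((c : ℝ) : ℂ).arg = 0 := Complex.arg_ofReal_of_nonneg hc.le
  have H : Tendsto (fun T : ℝ => (Qf β₁ 0 d T).arg) atTop (nhds (((c : ℝ) : ℂ)).arg) := by
    refine tendsto_arg_atTop _ (fun T => T ^ 2) _ ?_ ?_ ?_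
    · rw [Complex.mem_slitPlane_iff]; left; simpa using hc
    · filter_upwards [eventually_gt_atTop 0] with T hT; positivity
    · have h0 := (Gf_div_lim_pos β₁ 0 d).neg
      have hval : -((d + 0 * Real.sqrt 2 : ℝ) : ℂ) = ((c : ℝ) : ℂ) := by
        rw [hd]; push_cast; ring
      rw [hval] at h0
      refine h0.congr fun T => ?_
      rw [Qf, Pf_zero, div_one]
      push_cast
      ring
  rwa [hz] at H

lemma argQ_zero_neg {β₁ c d : ℝ} (hc : 0 < c) (hd : d = -β₁ * 0 - c) :
    Tendsto (fun T : ℝ => (Qf β₁ 0 d (-T)).arg) atTop (nhds 0) := by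
  have hz : ((c : ℝ) : ℂ).arg = 0 := Complex.arg_ofReal_of_nonneg hc.le
  have H : Tendsto (fun T : ℝ => (Qf β₁ 0 d (-T)).arg) atTop (nhds (((c : ℝ) : ℂ)).arg) := by
    refine tendsto_arg_atTop _ (fun T => T ^ 2) _ ?_ ?_ ?_
    · rw [Complex.mem_slitPlane_iff]; left; simpa using hc
    · filter_upwards [eventually_gt_atTop 0] with T hT; positivity
    · have h0 := (Gf_div_lim_neg β₁ 0 d).neg
      have hval : -((d - 0 * Real.sqrt 2 : ℝ) : ℂ) = ((c : ℝ) : ℂ) := by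
        rw [hd]; push_cast; ring
      rw [hval] at h0
      refine h0.congr fun T => ?_
      rw [Qf, Pf_zero, div_one]
      push_cast
      ring
  rwa [hz] at H


/-- Total winding for class `𝔄_{3,4}` with `b₁₂ ≠ 0` (here `c = |b₁₂|²`): the winding
number is `sign(B₊)` if `B₊B₋ < 0`, `0` if both are positive, and `±2` (a ghost charge)
if both are negative. -/
theorem stmt18 (β₁ β₂ c : ℝ) (hc : 0 < c)
    (d Bp Bm : ℝ)
    (hd : d = -β₁ * β₂ - c)
    (hBp : Bp = β₂ * (β₁ + Real.sqrt 2) + c)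
    (hBm : Bm = β₂ * (β₁ - Real.sqrt 2) + c)
    (hBp0 : Bp ≠ 0) (hBm0 : Bm ≠ 0)
    (G : ℝ → ℂ)
    (hG : G = fun u : ℝ => ((d * u ^ 2 + β₂ * u * Real.sqrt (2 * u ^ 2 + 1) : ℝ) : ℂ)
      + Complex.I * ((β₁ * u - Real.sqrt (2 * u ^ 2 + 1) : ℝ) : ℂ))
    (S : ℝ → ℂ) (hS : S = fun u => G u / (starRingEnd ℂ) (G u)) :
    (∀ u : ℝ, G u ≠ 0) ∧
    (Bp * Bm < 0 →
      Tendsto (fun T : ℝ => ∫ u in (-T)..T, deriv S u / S u) atTop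
        (nhds (2 * Real.pi * Complex.I * ((Real.sign Bp : ℝ) : ℂ)))) ∧
    (0 < Bp → 0 < Bm →
      Tendsto (fun T : ℝ => ∫ u in (-T)..T, deriv S u / S u) atTop (nhds 0)) ∧
    (Bp < 0 → Bm < 0 → β₁ ^ 2 > 2 ∧
      Tendsto (fun T : ℝ => ∫ u in (-T)..T, deriv S u / S u) atTop
        (nhds (2 * Real.pi * Complex.I * ((2 * Real.sign (Real.sqrt 2 - β₁) : ℝ) : ℂ)))) := by
  have hdC : d = -β₁ * β₂ - c := hd
  have hGf : G = Gf β₁ β₂ d := by rw [hG]; rfl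
  have hS' : S = fun u => Gf β₁ β₂ d u / (starRingEnd ℂ) (Gf β₁ β₂ d u) := by
    rw [hS, hGf]
  have sqrt2_pos : 0 < Real.sqrt 2 := Real.sqrt_pos.2 (by norm_num)
  have sqrt2_sq : Real.sqrt 2 ^ 2 = 2 := Real.sq_sqrt (by norm_num)
  refine ⟨fun u => hGf ▸ Gf_ne hc hd u, ?_, ?_, ?_⟩
  · -- mixed signs: winding ±1
    intro hmix
    have hβ₂ : β₂ ≠ 0 := by
      rintro rfl
      rw [hBp, hBm] at hmix
      nlinarith
    rcases hβ₂.lt_or_gt with hneg | hpos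
    · -- β₂ < 0 : Bp < 0 < Bm
      have hBplt : Bp < Bm := by nlinarith
      have hsigns : Bp < 0 ∧ 0 < Bm := by
        rcases mul_neg_iff.1 hmix with ⟨h1, h2⟩ | ⟨h1, h2⟩
        · linarith
        · exact ⟨h1, h2⟩
      refine reduce_tendsto hc hd S hS' (-π) _ ?_ ?_
      · rw [Real.sign_of_neg hsigns.1]
        push_cast
        ring
      · have h := hv_gen hc hd hBp hBm hβ₂ hBp0 hBm0
        rw [arg_mul_I_neg hneg,
          arg_mul_neg_I_neg (div_neg_of_pos_of_neg hsigns.2 hneg),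
          arg_mul_I_pos (by linarith : (0:ℝ) < -β₂),
          arg_mul_neg_I_neg (div_neg_of_neg_of_pos hsigns.1 (by linarith))] at h
        convert h using 2
        ring
    · -- β₂ > 0 : Bm < 0 < Bp
      have hBplt : Bm < Bp := by nlinarith
      have hsigns : 0 < Bp ∧ Bm < 0 := by
        rcases mul_neg_iff.1 hmix with ⟨h1, h2⟩ | ⟨h1, h2⟩
        · exact ⟨h1, h2⟩
        · linarith
      refine reduce_tendsto hc hd S hS' π _ ?_ ?_
      · rw [Real.sign_of_pos hsigns.1]
        push_cast
        ring
      · have h := hv_gen hc hd hBp hBm hβ₂ hBp0 hBm0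
        rw [arg_mul_I_pos hpos,
          arg_mul_neg_I_neg (div_neg_of_neg_of_pos hsigns.2 hpos),
          arg_mul_I_neg (by linarith : (-β₂:ℝ) < 0),
          arg_mul_neg_I_neg (div_neg_of_pos_of_neg hsigns.1 (by linarith))] at h
        convert h using 2
        ring
  · -- both positive: winding 0
    intro hBpp hBmp
    rcases eq_or_ne β₂ 0 with rfl | hβ₂
    · refine reduce_tendsto hc hd S hS' 0 0 (by norm_num) ?_
      have h1 := argQ_zero_pos hc hd
      have h2 := argQ_zero_neg hc hd
      have := h1.sub h2
      simp only [sub_zero] at this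
      refine this.congr fun T => ?_
      simp [Af, Pf_zero, Complex.arg_one]
    · refine reduce_tendsto hc hd S hS' 0 0 (by norm_num) ?_
      have h := hv_gen hc hd hBp hBm hβ₂ hBp0 hBm0
      rcases hβ₂.lt_or_gt with hneg | hpos
      · rw [arg_mul_I_neg hneg,
          arg_mul_neg_I_neg (div_neg_of_pos_of_neg hBmp hneg),
          arg_mul_I_pos (by linarith : (0:ℝ) < -β₂),
          arg_mul_neg_I_pos (div_pos hBpp (by linarith))] at h
        convert h using 2
        ring
      · rw [arg_mul_I_pos hpos,
          arg_mul_neg_I_pos (div_pos hBmp hpos),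
          arg_mul_I_neg (by linarith : (-β₂:ℝ) < 0),
          arg_mul_neg_I_neg (div_neg_of_pos_of_neg hBpp (by linarith))] at h
        convert h using 2
        ring
  · -- both negative: ghost charge ±2
    intro hBpn hBmn
    have hβ₂ : β₂ ≠ 0 := by
      rintro rfl
      rw [hBp] at hBpn
      simp at hBpn
      linarith
    rcases hβ₂.lt_or_gt with hneg | hpos
    · -- β₂ < 0 ⇒ β₁ > √2, winding -2
      have hβ₁ : Real.sqrt 2 < β₁ := by nlinarith
      constructor
      · nlinarith
      · refine reduce_tendsto hc hd S hS' (-(2*π)) _ ?_ ?_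
        · rw [Real.sign_of_neg (by linarith : Real.sqrt 2 - β₁ < 0)]
          push_cast
          ring
        · have h := hv_gen hc hd hBp hBm hβ₂ hBp0 hBm0
          rw [arg_mul_I_neg hneg,
            arg_mul_neg_I_pos (div_pos_of_neg_of_neg hBmn hneg),
            arg_mul_I_pos (by linarith : (0:ℝ) < -β₂),
            arg_mul_neg_I_neg (div_neg_of_neg_of_pos hBpn (by linarith))] at h
          convert h using 2
          ring
    · -- β₂ > 0 ⇒ β₁ < -√2, winding +2
      have hβ₁ : β₁ < -Real.sqrt 2 := by nlinarith
      constructor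
      · nlinarith
      · refine reduce_tendsto hc hd S hS' (2*π) _ ?_ ?_
        · rw [Real.sign_of_pos (by linarith : 0 < Real.sqrt 2 - β₁)]
          push_cast
          ring
        · have h := hv_gen hc hd hBp hBm hβ₂ hBp0 hBm0
          rw [arg_mul_I_pos hpos,
            arg_mul_neg_I_neg (div_neg_of_neg_of_pos hBmn hpos),
            arg_mul_I_neg (by linarith : (-β₂:ℝ) < 0),
            arg_mul_neg_I_pos (div_pos_of_neg_of_neg hBpn (by linarith))] at h
          convert h using 2
          ring
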